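/- Every simple matroid of rank 3 with no restriction isomorphic to U_{3,4} is a direct sum of matroids of rank at most 2; equivalently, either it is a line, or its ground set partitions into at most one line and points/lines forming a direct sum decomposition into parts of rank at most 2. -/

import Mathlib

open Matroid Set Filter

variable {α : Type*}

/-- The number of bases of a matroid. -/
noncomputable def Matroid.numBases (M : Matroid α) : ℕ := {B : Set α | M.IsBase B}.ncard

/-- Deletion of a set of elements from a matroid. -/
def Matroid.del (M : Matroid α) (D : Set α) : Matroid α := M ↾ (M.E \ D)

/-- Contraction of a set of elements in a matroid, defined by duality. -/
def Matroid.con (M : Matroid α) (C : Set α) : Matroid α := (M✶ ↾ (M✶.E \ C))✶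

/-- `N` is a minor of `M`: it is obtained by contracting a set `C` and deleting a set `D`. -/
def Matroid.IsMinorOf (N M : Matroid α) : Prop :=
  ∃ C D : Set α, C ⊆ M.E ∧ D ⊆ M.E ∧ Disjoint C D ∧ N = (M.con C).del D

/-- `M` is (a copy of) the uniform matroid `U_{s,t}`: it has `t` elements and its bases are
exactly the `s`-element subsets of the ground set. -/
def Matroid.IsUnif (M : Matroid α) (s t : ℕ) : Prop :=
  M.E.Finite ∧ M.E.ncard = t ∧ ∀ B, M.IsBase B ↔ B ⊆ M.E ∧ B.ncard = s

/-- `M` has a minor isomorphic to the uniform matroid `U_{s,t}`. -/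
def Matroid.HasUnifMinor (M : Matroid α) (s t : ℕ) : Prop :=
  ∃ N : Matroid α, N.IsMinorOf M ∧ N.IsUnif s t

/-- `M` has a restriction isomorphic to the uniform matroid `U_{s,t}`. -/
def Matroid.HasUnifRestriction (M : Matroid α) (s t : ℕ) : Prop :=
  ∃ X ⊆ M.E, (M ↾ X).IsUnif s t

/-- `M` has rank `r`. -/
def Matroid.RankEq (M : Matroid α) (r : ℕ) : Prop := ∃ B, M.IsBase B ∧ B.ncard = r

/-- `M` is a simple matroid: every single element and every pair of distinct elements
of the ground set is independent. -/
def Matroid.IsSimple (M : Matroid α) : Prop :=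
  (∀ e ∈ M.E, M.Indep {e}) ∧ ∀ e ∈ M.E, ∀ f ∈ M.E, e ≠ f → M.Indep {e, f}

/-- Every simple rank-3 matroid with no `U_{3,4}`-restriction is a direct sum of matroids of
rank at most 2: its ground set partitions into parts, each of rank at most 2, such that the
bases of `M` are exactly the sets meeting each part in a base of the restriction to that part. -/
private lemma aux_indep_encard_le (M : Matroid α) (hfin : M.E.Finite) (hrank : M.RankEq 3)
    {I : Set α} (hI : M.Indep I) : I.encard ≤ 3 := by
  obtain ⟨B₀, hB₀, hcard⟩ := hrank
  obtain ⟨B, hB, hIB⟩ := hI.exists_isBase_superset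
  have hB₀fin : B₀.Finite := hfin.subset hB₀.subset_ground
  have h3 : B.encard = 3 := by
    rw [hB.encard_eq_encard_of_isBase hB₀, ← hB₀fin.cast_ncard_eq, hcard]; rfl
  exact h3 ▸ encard_le_encard hIB

private lemma aux_line (M : Matroid α) {x y : α} (hxy : M.Indep {x, y})
    {I : Set α} (hIcl : I ⊆ M.closure {x, y}) (hI : M.Indep I) : I.encard ≤ 2 := by
  obtain ⟨J, hJ, hIJ⟩ := hI.subset_isBasis_of_subset hIcl (M.closure_subset_ground _)
  have hJ2 : J.encard = ({x, y} : Set α).encard := hJ.encard_eq_encard hxy.isBasis_closure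
  calc I.encard ≤ J.encard := encard_le_encard hIJ
    _ = ({x, y} : Set α).encard := hJ2
    _ ≤ ({y} : Set α).encard + 1 := encard_insert_le _ _
    _ ≤ 2 := by simp [encard_singleton]; rfl

private lemma aux_four (M : Matroid α) (hfin : M.E.Finite) (hrank : M.RankEq 3)
    (hU34 : ¬ M.HasUnifRestriction 3 4)
    {a b c d : α} (hab : a ≠ b) (hac : a ≠ c) (had : a ≠ d) (hbc : b ≠ c) (hbd : b ≠ d)
    (hcd : c ≠ d)
    (h1 : M.Indep {a, b, c}) (h2 : M.Indep {a, b, d}) (h3 : M.Indep {a, c, d})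
    (h4 : M.Indep {b, c, d}) : False := by
  set X : Set α := {a, b, c, d} with hX
  have hXE : X ⊆ M.E := by
    rw [hX]
    have := h1.subset_ground
    have := h2.subset_ground
    intro x hx
    rcases hx with rfl | rfl | rfl | rfl
    · exact h1.subset_ground (by simp)
    · exact h1.subset_ground (by simp)
    · exact h1.subset_ground (by simp)
    · exact h2.subset_ground (by simp)
  have hXfin : X.Finite := ((((Set.finite_singleton d).insert c).insert b).insert a)
  have hXcard : X.encard = 4 := by
    rw [hX, encard_insert_of_notMem (by simp [hab, hac, had]),
      encard_insert_of_notMem (by simp [hbc, hbd]),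
      encard_insert_of_notMem (by simp [hcd]), encard_singleton]
    rfl
  have hXncard : X.ncard = 4 := by
    rw [Set.ncard_def, hXcard]; rfl
  -- every 3-element subset of X is independent
  have htri : ∀ I, I ⊆ X → I.ncard = 3 → M.Indep I := by
    intro I hIX hI3
    have hIfin : I.Finite := hXfin.subset hIX
    have hdiff : (X \ I).ncard = 1 := by
      rw [Set.ncard_diff hIX hIfin, hXncard, hI3]
    obtain ⟨t, ht⟩ := Set.ncard_eq_one.1 hdiff
    have htX : t ∈ X := (ht ▸ (Set.mem_singleton t) : t ∈ X \ I).1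
    have hI : I = X \ {t} := by
      rw [← ht, Set.diff_diff_cancel_left hIX]
    rcases htX with rfl | rfl | rfl | rfl
    · have : X \ {t} = {b, c, d} := by
        ext x
        simp only [hX, mem_diff, mem_insert_iff, mem_singleton_iff]
        constructor
        · rintro ⟨rfl | rfl | rfl | rfl, hx⟩ <;> tauto
        · rintro (rfl | rfl | rfl) <;> exact ⟨by tauto, by tauto⟩
      rw [hI, this]; exact h4
    · have : X \ {t} = {a, c, d} := by
        ext x
        simp only [hX, mem_diff, mem_insert_iff, mem_singleton_iff]
        constructor
        · rintro ⟨rfl | rfl | rfl | rfl, hx⟩ <;> tauto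
        · rintro (rfl | rfl | rfl) <;> exact ⟨by tauto, by tauto⟩
      rw [hI, this]; exact h3
    · have : X \ {t} = {a, b, d} := by
        ext x
        simp only [hX, mem_diff, mem_insert_iff, mem_singleton_iff]
        constructor
        · rintro ⟨rfl | rfl | rfl | rfl, hx⟩ <;> tauto
        · rintro (rfl | rfl | rfl) <;> exact ⟨by tauto, by tauto⟩
      rw [hI, this]; exact h2
    · have : X \ {t} = {a, b, c} := by
        ext x
        simp only [hX, mem_diff, mem_insert_iff, mem_singleton_iff]
        constructor
        · rintro ⟨rfl | rfl | rfl | rfl, hx⟩ <;> tauto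
        · rintro (rfl | rfl | rfl) <;> exact ⟨by tauto, by tauto⟩
      rw [hI, this]; exact h1
  apply hU34
  refine ⟨X, hXE, ?_, ?_, ?_⟩
  · rwa [Matroid.restrict_ground_eq]
  · rwa [Matroid.restrict_ground_eq]
  · intro B
    rw [Matroid.isBase_restrict_iff hXE, Matroid.restrict_ground_eq]
    constructor
    · intro hB
      refine ⟨hB.subset, ?_⟩
      have hBfin : B.Finite := hXfin.subset hB.subset
      have hB3 : B.ncard ≤ 3 := by
        have := aux_indep_encard_le M hfin hrank hB.indep
        rwa [← hBfin.cast_ncard_eq, show ((3 : ℕ∞)) = ((3 : ℕ) : ℕ∞) from rfl,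
          Nat.cast_le] at this
      obtain ⟨J, hBJ, hJX, hJ3⟩ := Set.exists_subsuperset_card_eq hB.subset hB3
        (by rw [hXncard]; omega)
      have := hB.eq_of_subset_indep (htri J hJX hJ3) hBJ hJX
      rw [this, hJ3]
    · rintro ⟨hBX, hB3⟩
      have hBI : M.Indep B := htri B hBX hB3
      have hBfin : B.Finite := hXfin.subset hBX
      have hBenc : B.encard = 3 := by rw [← hBfin.cast_ncard_eq, hB3]; rfl
      refine hBI.isBasis_of_forall_insert hBX ?_
      intro e he
      rw [Matroid.dep_iff]
      refine ⟨fun hind => ?_, insert_subset (hXE he.1) (hBX.trans hXE)⟩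
      have h4' : (insert e B).encard = 4 := by
        rw [encard_insert_of_notMem he.2, hBenc]; rfl
      have := aux_indep_encard_le M hfin hrank hind
      rw [h4'] at this
      exact absurd this (by decide)

theorem unif_34_restriction_free_direct_sum (M : Matroid α)
    (hfin : M.E.Finite) (hsimple : M.IsSimple) (hrank : M.RankEq 3)
    (hU34 : ¬ M.HasUnifRestriction 3 4) :
    ∃ (ι : Type) (X : ι → Set α),
      (M.E = ⋃ i, X i) ∧ (Pairwise (Function.onFun Disjoint X)) ∧
      (∀ i, ∀ I ⊆ X i, M.Indep I → I.ncard ≤ 2) ∧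
      (∀ B : Set α, M.IsBase B ↔ (B ⊆ M.E ∧ ∀ i, (M ↾ (X i)).IsBase (B ∩ X i))) := by
  obtain ⟨B₀, hB₀, hB₀card⟩ := hrank
  have hrank' : M.RankEq 3 := ⟨B₀, hB₀, hB₀card⟩
  have hB₀fin : B₀.Finite := hfin.subset hB₀.subset_ground
  have hB₀enc : B₀.encard = 3 := by rw [← hB₀fin.cast_ncard_eq, hB₀card]; rfl
  -- two distinct elements of E
  obtain ⟨a₀, b₀, ha₀, hb₀, hab₀⟩ := (Set.one_lt_ncard_iff hB₀fin).1 (by omega)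
  -- maximize lines
  set S : Set (α × α) := {p | p.1 ∈ M.E ∧ p.2 ∈ M.E ∧ p.1 ≠ p.2} with hS
  have hSfin : S.Finite := (hfin.prod hfin).subset (fun p hp => ⟨hp.1, hp.2.1⟩)
  have hSne : S.Nonempty := ⟨(a₀, b₀), hB₀.subset_ground ha₀, hB₀.subset_ground hb₀, hab₀⟩
  obtain ⟨⟨a, b⟩, ⟨haE, hbE, hab⟩, hmax⟩ :=
    Set.exists_max_image S (fun p => (M.closure {p.1, p.2}).ncard) hSfin hSne
  set L : Set α := M.closure {a, b} with hL
  have habI : M.Indep {a, b} := hsimple.2 a haE b hbE hab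
  have hLE : L ⊆ M.E := M.closure_subset_ground _
  have hLfin : L.Finite := hfin.subset hLE
  have haE' : a ∈ M.E := haE
  have hbE' : b ∈ M.E := hbE
  have habE : ({a, b} : Set α) ⊆ M.E := insert_subset haE' (singleton_subset_iff.2 hbE')
  have habL : ({a, b} : Set α) ⊆ L := M.subset_closure _ habE
  have hclL : M.closure L = L := M.closure_closure _
  -- a point off L
  have hc : ∃ c ∈ M.E, c ∉ L := by
    by_contra h
    push_neg at h
    have hbase : M.IsBase {a, b} := habI.isBase_of_ground_subset_closure h
    have := hbase.encard_eq_encard_of_isBase hB₀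
    rw [encard_pair hab, hB₀enc] at this
    exact absurd this (by decide)
  obtain ⟨c, hcE, hcL⟩ := hc
  -- closures of pairs inside L stay inside L
  have hsubL : ∀ x ∈ L, ∀ y ∈ L, M.closure {x, y} ⊆ L := by
    intro x hx y hy
    have : ({x, y} : Set α) ⊆ L := by rintro z (rfl | rfl) <;> assumption
    calc M.closure {x, y} ⊆ M.closure L := M.closure_subset_closure this
      _ = L := hclL
  -- uniqueness of the point off L
  have huniq : ∀ q ∈ M.E, q ∉ L → q = c := by
    intro q hqE hqL
    by_contra hqc
    have hcq : M.Indep {c, q} := hsimple.2 c hcE q hqE (Ne.symm hqc)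
    have hcqE : ({c, q} : Set α) ⊆ M.E := hcq.subset_ground
    -- every two distinct points of L: at least one is in cl {c,q}
    have key : ∀ x ∈ L, ∀ y ∈ L, x ≠ y →
        x ∈ M.closure {c, q} ∨ y ∈ M.closure {c, q} := by
      intro x hx y hy hxy
      by_contra h
      push_neg at h
      obtain ⟨hxcl, hycl⟩ := h
      have hxE := hLE hx
      have hyE := hLE hy
      have hxyI : M.Indep {x, y} := hsimple.2 x hxE y hyE hxy
      have hxc : x ≠ c := fun h => hcL (h ▸ hx)
      have hxq : x ≠ q := fun h => hqL (h ▸ hx)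
      have hyc : y ≠ c := fun h => hcL (h ▸ hy)
      have hyq : y ≠ q := fun h => hqL (h ▸ hy)
      have hcq' : c ≠ q := Ne.symm hqc
      have hcxy : c ∉ M.closure {x, y} := fun h => hcL (hsubL x hx y hy h)
      have hqxy : q ∉ M.closure {x, y} := fun h => hqL (hsubL x hx y hy h)
      have h1 : M.Indep (insert c {x, y}) :=
        (hxyI.insert_indep_iff_of_notMem (by simp [hxc.symm, hyc.symm])).2 ⟨hcE, hcxy⟩
      have h2 : M.Indep (insert q {x, y}) :=
        (hxyI.insert_indep_iff_of_notMem (by simp [hxq.symm, hyq.symm])).2 ⟨hqE, hqxy⟩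
      have h3 : M.Indep (insert x {c, q}) :=
        (hcq.insert_indep_iff_of_notMem (by simp [hxc, hxq])).2 ⟨hxE, hxcl⟩
      have h4 : M.Indep (insert y {c, q}) :=
        (hcq.insert_indep_iff_of_notMem (by simp [hyc, hyq])).2 ⟨hyE, hycl⟩
      refine aux_four M hfin hrank' hU34 hxy hxc hxq hyc hyq hcq' ?_ ?_ h3 h4
      · rwa [show ({x, y, c} : Set α) = insert c {x, y} by ext z; simp; tauto]
      · rwa [show ({x, y, q} : Set α) = insert q {x, y} by ext z; simp; tauto]
    -- L ∩ cl{c,q} is a subsingleton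
    have hsub1 : (L ∩ M.closure {c, q}).Subsingleton := by
      intro x hx y hy
      by_contra hxy
      have hxyI : M.Indep {x, y} := hsimple.2 x (hLE hx.1) y (hLE hy.1) hxy
      have hccl : c ∈ M.closure {c, q} := M.subset_closure _ hcqE (by simp)
      have hxc : x ≠ c := fun h => hcL (h ▸ hx.1)
      have hyc : y ≠ c := fun h => hcL (h ▸ hy.1)
      have hdep : ¬ M.Indep (insert c {x, y}) := by
        intro hind
        have hsub : insert c ({x, y} : Set α) ⊆ M.closure {c, q} := by
          rintro z (rfl | rfl | rfl)
          exacts [hccl, hx.2, hy.2]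
        have := aux_line M hcq hsub hind
        rw [encard_insert_of_notMem (by simp [hxc.symm, hyc.symm]), encard_pair hxy] at this
        exact absurd this (by decide)
      rw [hxyI.insert_indep_iff_of_notMem (by simp [hxc.symm, hyc.symm])] at hdep
      simp only [mem_diff, not_and, not_not] at hdep
      exact hcL (hsubL x hx.1 y hy.1 (hdep hcE))
    have hsub2 : (L \ M.closure {c, q}).Subsingleton := by
      intro x hx y hy
      by_contra hxy
      rcases key x hx.1 y hy.1 hxy with h | h
      exacts [hx.2 h, hy.2 h]
    -- hence L has at most two elements
    have hL2 : L.encard ≤ 2 := by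
      have : L ⊆ (L ∩ M.closure {c, q}) ∪ (L \ M.closure {c, q}) := by
        intro z hz
        by_cases h : z ∈ M.closure {c, q}
        · exact Or.inl ⟨hz, h⟩
        · exact Or.inr ⟨hz, h⟩
      calc L.encard ≤ ((L ∩ M.closure {c, q}) ∪ (L \ M.closure {c, q})).encard :=
            encard_le_encard this
        _ ≤ (L ∩ M.closure {c, q}).encard + (L \ M.closure {c, q}).encard :=
            encard_union_le _ _
        _ ≤ 1 + 1 := add_le_add (encard_le_one_iff.2 (fun u v hu hv => hsub1 hu hv))
            (encard_le_one_iff.2 (fun u v hu hv => hsub2 hu hv))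
        _ = 2 := by rfl
    -- but cl {c,q} has at least 3 elements
    have hw : a ∈ M.closure {c, q} ∨ b ∈ M.closure {c, q} :=
      key a (habL (by simp)) b (habL (by simp)) hab
    have hcl3 : 3 ≤ (M.closure {c, q}).encard := by
      obtain hw | hw := hw
      · have hac : a ≠ c := fun h => hcL (h ▸ habL (by simp))
        have haq : a ≠ q := fun h => hqL (h ▸ habL (by simp))
        have : ({a, c, q} : Set α) ⊆ M.closure {c, q} := by
          rintro z (rfl | rfl | rfl)
          exacts [hw, M.subset_closure _ hcqE (by simp), M.subset_closure _ hcqE (by simp)]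
        calc (3 : ℕ∞) = ({a, c, q} : Set α).encard := by
              rw [encard_insert_of_notMem (by simp [hac, haq]), encard_pair (Ne.symm hqc)]; rfl
          _ ≤ _ := encard_le_encard this
      · have hbc' : b ≠ c := fun h => hcL (h ▸ habL (by simp))
        have hbq : b ≠ q := fun h => hqL (h ▸ habL (by simp))
        have : ({b, c, q} : Set α) ⊆ M.closure {c, q} := by
          rintro z (rfl | rfl | rfl)
          exacts [hw, M.subset_closure _ hcqE (by simp), M.subset_closure _ hcqE (by simp)]
        calc (3 : ℕ∞) = ({b, c, q} : Set α).encard := by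
              rw [encard_insert_of_notMem (by simp [hbc', hbq]), encard_pair (Ne.symm hqc)]; rfl
          _ ≤ _ := encard_le_encard this
    -- contradiction with maximality
    have hmax' := hmax (c, q) ⟨hcE, hqE, Ne.symm hqc⟩
    simp only at hmax'
    have hclfin : (M.closure {c, q}).Finite := hfin.subset (M.closure_subset_ground _)
    have h1 : 3 ≤ (M.closure {c, q}).ncard := by
      rwa [← hclfin.cast_ncard_eq, show ((3 : ℕ∞)) = ((3 : ℕ) : ℕ∞) from rfl,
        Nat.cast_le] at hcl3
    have h2 : L.ncard ≤ 2 := by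
      rwa [← hLfin.cast_ncard_eq, show ((2 : ℕ∞)) = ((2 : ℕ) : ℕ∞) from rfl,
        Nat.cast_le] at hL2
    omega
  -- E \ {c} ⊆ L
  have hEL : M.E \ {c} ⊆ L := by
    rintro q ⟨hqE, hqc⟩
    by_contra hqL
    exact hqc (huniq q hqE hqL)
  have hcEL : c ∉ M.closure (M.E \ {c}) := by
    have hsub : M.closure (M.E \ {c}) ⊆ L := by
      calc M.closure (M.E \ {c}) ⊆ M.closure L := M.closure_subset_closure hEL
        _ = L := hclL
    exact fun h => hcL (hsub h)
  -- the decomposition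
  refine ⟨Bool, fun i => if i then M.E \ {c} else {c}, ?_, ?_, ?_, ?_⟩
  · ext x
    simp only [Set.mem_iUnion, Bool.exists_bool, if_true, if_false]
    constructor
    · intro hx
      by_cases h : x = c
      · exact Or.inl (h ▸ rfl)
      · exact Or.inr ⟨hx, h⟩
    · rintro (rfl | ⟨hx, -⟩)
      exacts [hcE, hx]
  · intro i j hij
    have : Disjoint (M.E \ {c}) ({c} : Set α) := Set.disjoint_sdiff_left
    rcases i <;> rcases j <;> simp_all [Function.onFun]
  · intro i I hI hind
    rcases i with _ | _
    · simp only [if_false] at hI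
      calc I.ncard ≤ ({c} : Set α).ncard := Set.ncard_le_ncard hI (finite_singleton c)
        _ = 1 := Set.ncard_singleton c
        _ ≤ 2 := by omega
    · simp only [if_true] at hI
      have := aux_line M habI (hI.trans hEL) hind
      have hIfin : I.Finite := hfin.subset hind.subset_ground
      rwa [← hIfin.cast_ncard_eq, show ((2 : ℕ∞)) = ((2 : ℕ) : ℕ∞) from rfl,
        Nat.cast_le] at this
  · intro B
    have hE'E : M.E \ {c} ⊆ M.E := Set.diff_subset
    have hcE' : ({c} : Set α) ⊆ M.E := singleton_subset_iff.2 hcE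
    constructor
    · intro hB
      have hBE : B ⊆ M.E := hB.subset_ground
      have hBenc : B.encard = 3 := by rw [hB.encard_eq_encard_of_isBase hB₀, hB₀enc]
      have hcB : c ∈ B := by
        by_contra hcB
        have : B ⊆ L := fun x hx => hEL ⟨hBE hx, fun h => hcB (h ▸ hx)⟩
        have := aux_line M habI this hB.indep
        rw [hBenc] at this
        exact absurd this (by decide)
      refine ⟨hBE, ?_⟩
      intro i
      rcases i with _ | _
      · show (M ↾ ({c} : Set α)).IsBase (B ∩ {c})
        rw [Set.inter_eq_right.mpr (singleton_subset_iff.2 hcB),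
          Matroid.isBase_restrict_iff hcE']
        exact (hsimple.1 c hcE).isBasis_self
      · show (M ↾ (M.E \ {c})).IsBase (B ∩ (M.E \ {c}))
        rw [Matroid.isBase_restrict_iff hE'E]
        have hBint : B ∩ (M.E \ {c}) = B \ {c} := by
          rw [← Set.inter_diff_assoc, Set.inter_eq_left.mpr hBE]
        rw [hBint]
        have hD : M.Indep (B \ {c}) := hB.indep.subset Set.diff_subset
        have hDL : B \ {c} ⊆ L := fun x hx => hEL ⟨hBE hx.1, hx.2⟩
        have hDenc : (B \ {c}).encard = 2 := by
          rw [Set.encard_diff_singleton_of_mem hcB, hBenc]; rfl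
        refine hD.isBasis_of_subset_of_subset_closure
          (fun x hx => ⟨hBE hx.1, hx.2⟩) ?_
        intro z hz
        by_cases hzD : z ∈ B \ {c}
        · exact M.subset_closure _ (hD.subset_ground) hzD
        · rw [hD.mem_closure_iff_of_notMem hzD]
          rw [Matroid.dep_iff]
          refine ⟨fun hind => ?_, insert_subset hz.1 (hD.subset_ground)⟩
          have : insert z (B \ {c}) ⊆ L := insert_subset (hEL hz) hDL
          have h2 := aux_line M habI this hind
          rw [encard_insert_of_notMem hzD, hDenc] at h2
          exact absurd h2 (by decide)
    · rintro ⟨hBE, hbases⟩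
      have h_false : (M ↾ ({c} : Set α)).IsBase (B ∩ {c}) := hbases false
      have h_true : (M ↾ (M.E \ {c})).IsBase (B ∩ (M.E \ {c})) := hbases true
      rw [Matroid.isBase_restrict_iff hcE'] at h_false
      rw [Matroid.isBase_restrict_iff hE'E] at h_true
      have hcB : c ∈ B := by
        have := h_false.eq_of_subset_indep (hsimple.1 c hcE)
          Set.inter_subset_right Subset.rfl
        have hc' : c ∈ ({c} : Set α) := mem_singleton c
        rw [← this] at hc'
        exact hc'.1
      set D := B ∩ (M.E \ {c}) with hD
      have hBeq : B = insert c D := by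
        ext x
        constructor
        · intro hx
          by_cases h : x = c
          · exact Or.inl h
          · exact Or.inr ⟨hx, hBE hx, h⟩
        · rintro (rfl | hx)
          exacts [hcB, hx.1]
      have hcD : c ∉ D := fun h => h.2.2 rfl
      have hclD : M.closure D = M.closure (M.E \ {c}) := h_true.closure_eq_closure
      have hcclD : c ∉ M.closure D := hclD ▸ hcEL
      have hBind : M.Indep B := by
        rw [hBeq]
        exact (h_true.indep.insert_indep_iff_of_notMem hcD).2 ⟨hcE, hcclD⟩
      refine hBind.isBase_of_ground_subset_closure ?_
      intro x hx
      by_cases h : x = c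
      · exact M.subset_closure _ hBE (h ▸ hcB)
      · have : x ∈ M.closure D := h_true.subset_closure ⟨hx, h⟩
        exact M.closure_subset_closure Set.inter_subset_left this
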